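/- Let N₀ be a positive integer and x ∈ (0,1) with N₀·x an integer. Then, along population sizes N = m·N₀ with m → ∞: if R(0) > 1 and R(1) > 1 then π_{Nx}^{(N)} → 1, and if R(0) < 1 and R(1) < 1 then π_{Nx}^{(N)} → 0. -/

import Mathlib

open Finset Filter


private lemma convex_pos {w u v : ℝ} (hw0 : 0 ≤ w) (hw1 : w ≤ 1) (hu : 0 < u) (hv : 0 < v) :
    0 < (1 - w) * u + w * v := by
  rcases eq_or_lt_of_le hw0 with h | h
  · rw [← h]; nlinarith
  · nlinarith [mul_nonneg (sub_nonneg.2 hw1) hu.le, mul_pos h hv]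

private lemma gexpr_pos {c d w : ℝ} (hc : 0 < c) (hd : 0 < d) (hw0 : 0 ≤ w) (hw1 : w ≤ 1)
    {N i : ℕ} (hN : 3 ≤ N) (hi1 : 1 ≤ i) (hiN : i ≤ N - 1) :
    0 < 1 - w + w * (c * (i : ℝ) / ((N : ℝ) - 1) + d * ((N : ℝ) - (i : ℝ) - 1) / ((N : ℝ) - 1)) := by
  have hNr : (3:ℝ) ≤ (N:ℝ) := by exact_mod_cast hN
  have hir : (1:ℝ) ≤ (i:ℝ) := by exact_mod_cast hi1
  have hiNr : (i:ℝ) + 1 ≤ (N:ℝ) := by exact_mod_cast (by omega : i + 1 ≤ N)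
  have hs : (0:ℝ) < (N:ℝ) - 1 := by linarith
  have hv : 0 < c * (i : ℝ) / ((N : ℝ) - 1) + d * ((N : ℝ) - (i : ℝ) - 1) / ((N : ℝ) - 1) := by
    have h1 : 0 < c * (i : ℝ) / ((N : ℝ) - 1) := div_pos (mul_pos hc (by linarith)) hs
    have h2 : 0 ≤ d * ((N : ℝ) - (i : ℝ) - 1) / ((N : ℝ) - 1) :=
      div_nonneg (mul_nonneg hd.le (by linarith)) hs.le
    linarith
  have := convex_pos hw0 hw1 one_pos hv
  linarith

private lemma gexpr_le {c d w : ℝ} (hc : 0 < c) (hd : 0 < d) (hw0 : 0 ≤ w) (hw1 : w ≤ 1)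
    {N i : ℕ} (hN : 3 ≤ N) (hi1 : 1 ≤ i) (hiN : i ≤ N - 1) :
    1 - w + w * (c * (i : ℝ) / ((N : ℝ) - 1) + d * ((N : ℝ) - (i : ℝ) - 1) / ((N : ℝ) - 1))
      ≤ 1 + c + d := by
  have hNr : (3:ℝ) ≤ (N:ℝ) := by exact_mod_cast hN
  have hir : (1:ℝ) ≤ (i:ℝ) := by exact_mod_cast hi1
  have hiNr : (i:ℝ) + 1 ≤ (N:ℝ) := by exact_mod_cast (by omega : i + 1 ≤ N)
  have hs : (0:ℝ) < (N:ℝ) - 1 := by linarith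
  have h1 : c * (i : ℝ) / ((N : ℝ) - 1) ≤ c := by
    rw [div_le_iff₀ hs]; nlinarith
  have h2 : d * ((N : ℝ) - (i : ℝ) - 1) / ((N : ℝ) - 1) ≤ d := by
    rw [div_le_iff₀ hs]; nlinarith
  have hv0 : 0 ≤ c * (i : ℝ) / ((N : ℝ) - 1) + d * ((N : ℝ) - (i : ℝ) - 1) / ((N : ℝ) - 1) := by
    have h3 : 0 ≤ c * (i : ℝ) / ((N : ℝ) - 1) := div_nonneg (mul_nonneg hc.le (by linarith)) hs.le
    have h4 : 0 ≤ d * ((N : ℝ) - (i : ℝ) - 1) / ((N : ℝ) - 1) :=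
      div_nonneg (mul_nonneg hd.le (by linarith)) hs.le
    linarith
  nlinarith [mul_le_mul_of_nonneg_right hw1 hv0]

private lemma fexpr_pos {a b w : ℝ} (ha : 0 < a) (hb : 0 < b) (hw0 : 0 ≤ w) (hw1 : w ≤ 1)
    {N i : ℕ} (hN : 3 ≤ N) (hi1 : 1 ≤ i) (hiN : i ≤ N - 1) :
    0 < 1 - w + w * (a * ((i : ℝ) - 1) / ((N : ℝ) - 1) + b * ((N : ℝ) - (i : ℝ)) / ((N : ℝ) - 1)) := by
  have hNr : (3:ℝ) ≤ (N:ℝ) := by exact_mod_cast hN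
  have hir : (1:ℝ) ≤ (i:ℝ) := by exact_mod_cast hi1
  have hiNr : (i:ℝ) + 1 ≤ (N:ℝ) := by exact_mod_cast (by omega : i + 1 ≤ N)
  have hs : (0:ℝ) < (N:ℝ) - 1 := by linarith
  have hv : 0 < a * ((i : ℝ) - 1) / ((N : ℝ) - 1) + b * ((N : ℝ) - (i : ℝ)) / ((N : ℝ) - 1) := by
    have h1 : 0 ≤ a * ((i : ℝ) - 1) / ((N : ℝ) - 1) :=
      div_nonneg (mul_nonneg ha.le (by linarith)) hs.le
    have h2 : 0 < b * ((N : ℝ) - (i : ℝ)) / ((N : ℝ) - 1) :=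
      div_pos (mul_pos hb (by linarith)) hs
    linarith
  have := convex_pos hw0 hw1 one_pos hv
  linarith

private lemma ratio_ge {a b c d w : ℝ} (ha : 0 < a) (hb : 0 < b) (hc : 0 < c) (hd : 0 < d)
    (hw : 0 < w) (hw1 : w ≤ 1) (hac : c < a) (hbd : d < b) :
    ∃ δ : ℝ, 0 < δ ∧ ∃ M : ℕ, ∀ N i : ℕ, M ≤ N → 3 ≤ N → 1 ≤ i → i ≤ N - 1 →
      1 + δ ≤ (1 - w + w * (a * ((i : ℝ) - 1) / ((N : ℝ) - 1) +
                b * ((N : ℝ) - (i : ℝ)) / ((N : ℝ) - 1))) /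
              (1 - w + w * (c * (i : ℝ) / ((N : ℝ) - 1) +
                d * ((N : ℝ) - (i : ℝ) - 1) / ((N : ℝ) - 1))) := by
  set μ := min (a - c) (b - d) with hμdef
  have hμ : 0 < μ := lt_min (by linarith) (by linarith)
  have hG : (0:ℝ) < 1 + c + d := by linarith
  refine ⟨w * μ / (2 * (1 + c + d)), by positivity, ?_⟩
  obtain ⟨M, hM⟩ := exists_nat_ge ((3 * μ + 2 * |b - c|) / μ)
  refine ⟨M, fun N i hMN hN3 hi1 hiN => ?_⟩
  have hNr : (3:ℝ) ≤ (N:ℝ) := by exact_mod_cast hN3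
  have hir : (1:ℝ) ≤ (i:ℝ) := by exact_mod_cast hi1
  have hiNr : (i:ℝ) + 1 ≤ (N:ℝ) := by exact_mod_cast (by omega : i + 1 ≤ N)
  have hs : (0:ℝ) < (N:ℝ) - 1 := by linarith
  have hg := gexpr_pos hc hd hw.le hw1 hN3 hi1 hiN
  have hgG := gexpr_le hc hd hw.le hw1 hN3 hi1 hiN
  have hfg : (1 - w + w * (a * ((i : ℝ) - 1) / ((N : ℝ) - 1) +
                b * ((N : ℝ) - (i : ℝ)) / ((N : ℝ) - 1))) -
             (1 - w + w * (c * (i : ℝ) / ((N : ℝ) - 1) +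
                d * ((N : ℝ) - (i : ℝ) - 1) / ((N : ℝ) - 1)))
      = w * ((a - c) * ((i:ℝ) - 1) + (b - d) * ((N:ℝ) - (i:ℝ) - 1) + (b - c)) / ((N:ℝ) - 1) := by
    field_simp
    ring
  have hMr : 3 * μ + 2 * |b - c| ≤ (M:ℝ) * μ := by
    rw [← div_le_iff₀ hμ]; exact hM
  have hMN' : (M:ℝ) ≤ (N:ℝ) := by exact_mod_cast hMN
  have hNμ : 3 * μ + 2 * |b - c| ≤ (N:ℝ) * μ :=
    le_trans hMr (mul_le_mul_of_nonneg_right hMN' hμ.le)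
  have hbr : μ * ((N:ℝ) - 1) / 2 ≤
      (a - c) * ((i:ℝ) - 1) + (b - d) * ((N:ℝ) - (i:ℝ) - 1) + (b - c) := by
    have h1 : μ * ((i:ℝ) - 1) ≤ (a - c) * ((i:ℝ) - 1) :=
      mul_le_mul_of_nonneg_right (min_le_left _ _) (by linarith)
    have h2 : μ * ((N:ℝ) - (i:ℝ) - 1) ≤ (b - d) * ((N:ℝ) - (i:ℝ) - 1) :=
      mul_le_mul_of_nonneg_right (min_le_right _ _) (by linarith)
    have h3 : -|b - c| ≤ b - c := neg_abs_le _
    linarith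
  have hfg2 : w * μ / 2 ≤ (1 - w + w * (a * ((i : ℝ) - 1) / ((N : ℝ) - 1) +
                b * ((N : ℝ) - (i : ℝ)) / ((N : ℝ) - 1))) -
             (1 - w + w * (c * (i : ℝ) / ((N : ℝ) - 1) +
                d * ((N : ℝ) - (i : ℝ) - 1) / ((N : ℝ) - 1))) := by
    rw [hfg, le_div_iff₀ hs]
    linarith [mul_le_mul_of_nonneg_left hbr hw.le]
  rw [le_div_iff₀ hg]
  have hδg : (w * μ / (2 * (1 + c + d))) *
      (1 - w + w * (c * (i : ℝ) / ((N : ℝ) - 1) +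
        d * ((N : ℝ) - (i : ℝ) - 1) / ((N : ℝ) - 1))) ≤ w * μ / 2 := by
    have h := mul_le_mul_of_nonneg_left hgG (by positivity : (0:ℝ) ≤ w * μ / (2 * (1 + c + d)))
    have he : (w * μ / (2 * (1 + c + d))) * (1 + c + d) = w * μ / 2 := by
      field_simp
    linarith
  linarith [hδg, hfg2]

private lemma ratio_le {a b c d w : ℝ} (ha : 0 < a) (hb : 0 < b) (hc : 0 < c) (hd : 0 < d)
    (hw : 0 < w) (hw1 : w ≤ 1) (hac : a < c) (hbd : b < d) :
    ∃ δ : ℝ, 0 < δ ∧ δ < 1 ∧ ∃ M : ℕ, ∀ N i : ℕ, M ≤ N → 3 ≤ N → 1 ≤ i → i ≤ N - 1 →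
      (1 - w + w * (a * ((i : ℝ) - 1) / ((N : ℝ) - 1) +
                b * ((N : ℝ) - (i : ℝ)) / ((N : ℝ) - 1))) /
              (1 - w + w * (c * (i : ℝ) / ((N : ℝ) - 1) +
                d * ((N : ℝ) - (i : ℝ) - 1) / ((N : ℝ) - 1))) ≤ 1 - δ := by
  set μ := min (c - a) (d - b) with hμdef
  have hμ : 0 < μ := lt_min (by linarith) (by linarith)
  have hG : (0:ℝ) < 1 + c + d := by linarith
  have hδ1 : w * μ / (2 * (1 + c + d)) < 1 := by
    rw [div_lt_one (by positivity)]
    have h1 : μ ≤ d - b := min_le_right _ _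
    nlinarith [mul_le_mul_of_nonneg_right hw1 hμ.le]
  refine ⟨w * μ / (2 * (1 + c + d)), by positivity, hδ1, ?_⟩
  obtain ⟨M, hM⟩ := exists_nat_ge ((3 * μ + 2 * |c - b|) / μ)
  refine ⟨M, fun N i hMN hN3 hi1 hiN => ?_⟩
  have hNr : (3:ℝ) ≤ (N:ℝ) := by exact_mod_cast hN3
  have hir : (1:ℝ) ≤ (i:ℝ) := by exact_mod_cast hi1
  have hiNr : (i:ℝ) + 1 ≤ (N:ℝ) := by exact_mod_cast (by omega : i + 1 ≤ N)
  have hs : (0:ℝ) < (N:ℝ) - 1 := by linarith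
  have hg := gexpr_pos hc hd hw.le hw1 hN3 hi1 hiN
  have hgG := gexpr_le hc hd hw.le hw1 hN3 hi1 hiN
  have hfg : (1 - w + w * (c * (i : ℝ) / ((N : ℝ) - 1) +
                d * ((N : ℝ) - (i : ℝ) - 1) / ((N : ℝ) - 1))) -
             (1 - w + w * (a * ((i : ℝ) - 1) / ((N : ℝ) - 1) +
                b * ((N : ℝ) - (i : ℝ)) / ((N : ℝ) - 1)))
      = w * ((c - a) * ((i:ℝ) - 1) + (d - b) * ((N:ℝ) - (i:ℝ) - 1) + (c - b)) / ((N:ℝ) - 1) := by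
    field_simp
    ring
  have hMr : 3 * μ + 2 * |c - b| ≤ (M:ℝ) * μ := by
    rw [← div_le_iff₀ hμ]; exact hM
  have hMN' : (M:ℝ) ≤ (N:ℝ) := by exact_mod_cast hMN
  have hNμ : 3 * μ + 2 * |c - b| ≤ (N:ℝ) * μ :=
    le_trans hMr (mul_le_mul_of_nonneg_right hMN' hμ.le)
  have hbr : μ * ((N:ℝ) - 1) / 2 ≤
      (c - a) * ((i:ℝ) - 1) + (d - b) * ((N:ℝ) - (i:ℝ) - 1) + (c - b) := by
    have h1 : μ * ((i:ℝ) - 1) ≤ (c - a) * ((i:ℝ) - 1) :=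
      mul_le_mul_of_nonneg_right (min_le_left _ _) (by linarith)
    have h2 : μ * ((N:ℝ) - (i:ℝ) - 1) ≤ (d - b) * ((N:ℝ) - (i:ℝ) - 1) :=
      mul_le_mul_of_nonneg_right (min_le_right _ _) (by linarith)
    have h3 : -|c - b| ≤ c - b := neg_abs_le _
    linarith
  have hfg2 : w * μ / 2 ≤ (1 - w + w * (c * (i : ℝ) / ((N : ℝ) - 1) +
                d * ((N : ℝ) - (i : ℝ) - 1) / ((N : ℝ) - 1))) -
             (1 - w + w * (a * ((i : ℝ) - 1) / ((N : ℝ) - 1) +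
                b * ((N : ℝ) - (i : ℝ)) / ((N : ℝ) - 1))) := by
    rw [hfg, le_div_iff₀ hs]
    linarith [mul_le_mul_of_nonneg_left hbr hw.le]
  rw [div_le_iff₀ hg]
  have hδg : (w * μ / (2 * (1 + c + d))) *
      (1 - w + w * (c * (i : ℝ) / ((N : ℝ) - 1) +
        d * ((N : ℝ) - (i : ℝ) - 1) / ((N : ℝ) - 1))) ≤ w * μ / 2 := by
    have h := mul_le_mul_of_nonneg_left hgG (by positivity : (0:ℝ) ≤ w * μ / (2 * (1 + c + d)))
    have he : (w * μ / (2 * (1 + c + d))) * (1 + c + d) = w * μ / 2 := by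
      field_simp
    linarith
  linarith [hδg, hfg2]

private lemma pi_near_one (ρ : ℕ → ℝ) (N i : ℕ) (δ : ℝ) (hδ : 0 < δ)
    (hρ : ∀ k ∈ Finset.Icc 1 (N - 1), 1 + δ ≤ ρ k)
    (hi1 : 1 ≤ i) (hiN : i ≤ N - 1) :
    1 - ((N : ℝ) - (i : ℝ)) * ((1 + δ)⁻¹) ^ i ≤
      (1 + ∑ j ∈ Finset.Icc 1 (i - 1), ∏ k ∈ Finset.Icc 1 j, (ρ k)⁻¹) /
      (1 + ∑ j ∈ Finset.Icc 1 (N - 1), ∏ k ∈ Finset.Icc 1 j, (ρ k)⁻¹) ∧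
    (1 + ∑ j ∈ Finset.Icc 1 (i - 1), ∏ k ∈ Finset.Icc 1 j, (ρ k)⁻¹) /
      (1 + ∑ j ∈ Finset.Icc 1 (N - 1), ∏ k ∈ Finset.Icc 1 j, (ρ k)⁻¹) ≤ 1 := by
  have hN1 : 1 ≤ N - 1 := le_trans hi1 hiN
  set q : ℝ := (1 + δ)⁻¹ with hqdef
  have hq0 : 0 < q := by positivity
  have hq1 : q < 1 := by
    rw [hqdef, inv_lt_one_iff₀]; right; linarith
  have hρpos : ∀ k ∈ Finset.Icc 1 (N - 1), 0 < ρ k :=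
    fun k hk => lt_of_lt_of_le (by linarith) (hρ k hk)
  have hterm_nonneg : ∀ j ∈ Finset.Icc 1 (N - 1), 0 ≤ ∏ k ∈ Finset.Icc 1 j, (ρ k)⁻¹ := by
    intro j hj
    refine Finset.prod_nonneg fun k hk => inv_nonneg.2 (hρpos k ?_).le
    rw [Finset.mem_Icc] at *
    omega
  have hterm : ∀ j ∈ Finset.Icc i (N - 1), ∏ k ∈ Finset.Icc 1 j, (ρ k)⁻¹ ≤ q ^ i := by
    intro j hj
    rw [Finset.mem_Icc] at hj
    calc ∏ k ∈ Finset.Icc 1 j, (ρ k)⁻¹ ≤ ∏ _k ∈ Finset.Icc 1 j, q := by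
          refine Finset.prod_le_prod (fun k hk => ?_) (fun k hk => ?_)
          · rw [Finset.mem_Icc] at hk
            exact inv_nonneg.2 (hρpos k (Finset.mem_Icc.2 ⟨hk.1, le_trans hk.2 hj.2⟩)).le
          · rw [Finset.mem_Icc] at hk
            have := hρ k (Finset.mem_Icc.2 ⟨hk.1, le_trans hk.2 hj.2⟩)
            rw [hqdef]
            exact inv_anti₀ (by linarith) this
      _ = q ^ j := by rw [Finset.prod_const, Nat.card_Icc]; norm_num
      _ ≤ q ^ i := pow_le_pow_of_le_one hq0.le hq1.le hj.1
  have hsplit : (∑ j ∈ Finset.Icc 1 (N - 1), ∏ k ∈ Finset.Icc 1 j, (ρ k)⁻¹) =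
      (∑ j ∈ Finset.Icc 1 (i - 1), ∏ k ∈ Finset.Icc 1 j, (ρ k)⁻¹) +
      ∑ j ∈ Finset.Icc i (N - 1), ∏ k ∈ Finset.Icc 1 j, (ρ k)⁻¹ := by
    have e1 : Finset.Icc 1 (i - 1) = Finset.Ioc 0 (i - 1) := by
      rw [← Finset.Icc_add_one_left_eq_Ioc]; rfl
    have e2 : Finset.Icc i (N - 1) = Finset.Ioc (i - 1) (N - 1) := by
      rw [← Finset.Icc_add_one_left_eq_Ioc]; congr 1; omega
    have e3 : Finset.Icc 1 (N - 1) = Finset.Ioc 0 (N - 1) := by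
      rw [← Finset.Icc_add_one_left_eq_Ioc]; rfl
    rw [e1, e2, e3]
    exact (Finset.sum_Ioc_consecutive _ (by omega) (by omega)).symm
  set A : ℝ := 1 + ∑ j ∈ Finset.Icc 1 (i - 1), ∏ k ∈ Finset.Icc 1 j, (ρ k)⁻¹ with hAdef
  set S : ℝ := ∑ j ∈ Finset.Icc i (N - 1), ∏ k ∈ Finset.Icc 1 j, (ρ k)⁻¹ with hSdef
  have hA1 : 1 ≤ A := by
    rw [hAdef]
    have : 0 ≤ ∑ j ∈ Finset.Icc 1 (i - 1), ∏ k ∈ Finset.Icc 1 j, (ρ k)⁻¹ := by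
      refine Finset.sum_nonneg fun j hj => hterm_nonneg j ?_
      rw [Finset.mem_Icc] at *
      omega
    linarith
  have hS0 : 0 ≤ S := by
    rw [hSdef]
    refine Finset.sum_nonneg fun j hj => hterm_nonneg j ?_
    rw [Finset.mem_Icc] at *
    omega
  have hden : 1 + ∑ j ∈ Finset.Icc 1 (N - 1), ∏ k ∈ Finset.Icc 1 j, (ρ k)⁻¹ = A + S := by
    rw [hsplit, hAdef, hSdef]; ring
  have hiN' : (i : ℝ) ≤ (N : ℝ) - 1 := by
    have : i + 1 ≤ N := by omega
    have := (Nat.cast_le (α := ℝ)).2 this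
    push_cast at this
    linarith
  have hB0 : 0 ≤ ((N : ℝ) - (i : ℝ)) * q ^ i := by
    have : (0:ℝ) ≤ (N : ℝ) - (i : ℝ) := by linarith
    positivity
  have hSle : S ≤ ((N : ℝ) - (i : ℝ)) * q ^ i := by
    calc S ≤ (Finset.Icc i (N - 1)).card • (q ^ i) := Finset.sum_le_card_nsmul _ _ _ hterm
      _ = ((N - 1 + 1 - i : ℕ) : ℝ) * q ^ i := by rw [Nat.card_Icc, nsmul_eq_mul]
      _ ≤ ((N : ℝ) - (i : ℝ)) * q ^ i := by
          refine mul_le_mul_of_nonneg_right ?_ (by positivity)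
          have h1 : N - 1 + 1 - i = N - i := by omega
          rw [h1]
          have h2 : ((N - i : ℕ) : ℝ) = (N : ℝ) - (i : ℝ) :=
            Nat.cast_sub (by omega)
          rw [h2]
  rw [hden]
  have hAS : 0 < A + S := by linarith
  constructor
  · rw [le_div_iff₀ hAS]
    nlinarith [mul_le_mul_of_nonneg_left hA1 hB0, mul_nonneg hB0 hS0]
  · rw [div_le_one hAS]
    linarith

private lemma pi_near_zero (ρ : ℕ → ℝ) (N i : ℕ) (δ : ℝ) (hδ0 : 0 < δ) (hδ1 : δ < 1)
    (hρpos : ∀ k ∈ Finset.Icc 1 (N - 1), 0 < ρ k)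
    (hρ : ∀ k ∈ Finset.Icc 1 (N - 1), ρ k ≤ 1 - δ)
    (hi1 : 1 ≤ i) (hiN : i ≤ N - 1) :
    0 ≤ (1 + ∑ j ∈ Finset.Icc 1 (i - 1), ∏ k ∈ Finset.Icc 1 j, (ρ k)⁻¹) /
      (1 + ∑ j ∈ Finset.Icc 1 (N - 1), ∏ k ∈ Finset.Icc 1 j, (ρ k)⁻¹) ∧
    (1 + ∑ j ∈ Finset.Icc 1 (i - 1), ∏ k ∈ Finset.Icc 1 j, (ρ k)⁻¹) /
      (1 + ∑ j ∈ Finset.Icc 1 (N - 1), ∏ k ∈ Finset.Icc 1 j, (ρ k)⁻¹) ≤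
      (i : ℝ) * (1 - δ) ^ (N - i) := by
  have hN1 : 1 ≤ N - 1 := le_trans hi1 hiN
  have hd1 : (0:ℝ) < 1 - δ := by linarith
  have hinv1 : ∀ k ∈ Finset.Icc 1 (N - 1), 1 ≤ (ρ k)⁻¹ :=
    fun k hk => (one_le_inv₀ (hρpos k hk)).2 (le_trans (hρ k hk) (by linarith))
  have hinvq : ∀ k ∈ Finset.Icc 1 (N - 1), (1 - δ)⁻¹ ≤ (ρ k)⁻¹ :=
    fun k hk => inv_anti₀ (hρpos k hk) (hρ k hk)
  set P : ℝ := ∏ k ∈ Finset.Icc 1 (i - 1), (ρ k)⁻¹ with hPdef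
  have hsubP : Finset.Icc 1 (i - 1) ⊆ Finset.Icc 1 (N - 1) :=
    Finset.Icc_subset_Icc le_rfl (by omega)
  have hone_le : ∀ s : Finset ℕ, (∀ k ∈ s, k ∈ Finset.Icc 1 (N - 1)) →
      1 ≤ ∏ k ∈ s, (ρ k)⁻¹ := by
    intro s hs
    calc (1:ℝ) = ∏ _k ∈ s, 1 := Finset.prod_const_one.symm
      _ ≤ ∏ k ∈ s, (ρ k)⁻¹ :=
        Finset.prod_le_prod (fun _ _ => zero_le_one) (fun k hk => hinv1 k (hs k hk))
  have hP1 : 1 ≤ P := hone_le _ fun k hk => hsubP hk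
  -- numerator ≤ i * P
  have hnum : (1 + ∑ j ∈ Finset.Icc 1 (i - 1), ∏ k ∈ Finset.Icc 1 j, (ρ k)⁻¹) ≤ (i : ℝ) * P := by
    have hterm : ∀ j ∈ Finset.Icc 1 (i - 1), ∏ k ∈ Finset.Icc 1 j, (ρ k)⁻¹ ≤ P := by
      intro j hj
      rw [Finset.mem_Icc] at hj
      have e1 : Finset.Icc 1 j = Finset.Ioc 0 j := by rw [← Finset.Icc_add_one_left_eq_Ioc]; rfl
      have e2 : Finset.Icc 1 (i - 1) = Finset.Ioc 0 (i - 1) := by rw [← Finset.Icc_add_one_left_eq_Ioc]; rfl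
      have hsplit := Finset.prod_Ioc_consecutive (fun k => (ρ k)⁻¹) (Nat.zero_le j) hj.2
      have htail : 1 ≤ ∏ k ∈ Finset.Ioc j (i - 1), (ρ k)⁻¹ := by
        refine hone_le _ fun k hk => ?_
        rw [Finset.mem_Ioc] at hk
        rw [Finset.mem_Icc]
        omega
      have hhead : 0 ≤ ∏ k ∈ Finset.Ioc 0 j, (ρ k)⁻¹ := by
        refine Finset.prod_nonneg fun k hk => inv_nonneg.2 (hρpos k ?_).le
        rw [Finset.mem_Ioc] at hk
        rw [Finset.mem_Icc]
        omega
      calc ∏ k ∈ Finset.Icc 1 j, (ρ k)⁻¹ = ∏ k ∈ Finset.Ioc 0 j, (ρ k)⁻¹ := by rw [e1]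
        _ ≤ (∏ k ∈ Finset.Ioc 0 j, (ρ k)⁻¹) * ∏ k ∈ Finset.Ioc j (i - 1), (ρ k)⁻¹ :=
            le_mul_of_one_le_right hhead htail
        _ = P := by rw [hPdef, e2, hsplit]
    have hsum : (∑ j ∈ Finset.Icc 1 (i - 1), ∏ k ∈ Finset.Icc 1 j, (ρ k)⁻¹) ≤
        (Finset.Icc 1 (i - 1)).card • P := Finset.sum_le_card_nsmul _ _ _ hterm
    rw [Nat.card_Icc, nsmul_eq_mul] at hsum
    have hcard : ((i - 1 + 1 - 1 : ℕ) : ℝ) = (i : ℝ) - 1 := by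
      have : i - 1 + 1 - 1 = i - 1 := by omega
      rw [this, Nat.cast_sub hi1]
      norm_num
    rw [hcard] at hsum
    nlinarith
  -- denominator ≥ P * ((1-δ)⁻¹)^(N-i)
  have hQ : ((1 - δ)⁻¹) ^ (N - i) ≤ ∏ k ∈ Finset.Icc i (N - 1), (ρ k)⁻¹ := by
    calc ((1 - δ)⁻¹) ^ (N - i) = ∏ _k ∈ Finset.Icc i (N - 1), (1 - δ)⁻¹ := by
          rw [Finset.prod_const, Nat.card_Icc]
          congr 1
          omega
      _ ≤ ∏ k ∈ Finset.Icc i (N - 1), (ρ k)⁻¹ :=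
          Finset.prod_le_prod (fun _ _ => by positivity)
            (fun k hk => hinvq k (Finset.Icc_subset_Icc hi1 le_rfl hk))
  have hfull : (∏ k ∈ Finset.Icc 1 (N - 1), (ρ k)⁻¹) =
      P * ∏ k ∈ Finset.Icc i (N - 1), (ρ k)⁻¹ := by
    have e1 : Finset.Icc 1 (i - 1) = Finset.Ioc 0 (i - 1) := by rw [← Finset.Icc_add_one_left_eq_Ioc]; rfl
    have e2 : Finset.Icc i (N - 1) = Finset.Ioc (i - 1) (N - 1) := by
      rw [← Finset.Icc_add_one_left_eq_Ioc]; congr 1; omega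
    have e3 : Finset.Icc 1 (N - 1) = Finset.Ioc 0 (N - 1) := by rw [← Finset.Icc_add_one_left_eq_Ioc]; rfl
    rw [hPdef, e1, e2, e3]
    exact (Finset.prod_Ioc_consecutive _ (by omega) (by omega)).symm
  have hterm_nonneg : ∀ j ∈ Finset.Icc 1 (N - 1), 0 ≤ ∏ k ∈ Finset.Icc 1 j, (ρ k)⁻¹ := by
    intro j hj
    rw [Finset.mem_Icc] at hj
    exact Finset.prod_nonneg fun k hk => by
      rw [Finset.mem_Icc] at hk
      exact inv_nonneg.2 (hρpos k (Finset.mem_Icc.2 ⟨hk.1, le_trans hk.2 hj.2⟩)).le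
  have hden_ge : P * ((1 - δ)⁻¹) ^ (N - i) ≤
      1 + ∑ j ∈ Finset.Icc 1 (N - 1), ∏ k ∈ Finset.Icc 1 j, (ρ k)⁻¹ := by
    have h1 : P * ((1 - δ)⁻¹) ^ (N - i) ≤ ∏ k ∈ Finset.Icc 1 (N - 1), (ρ k)⁻¹ := by
      rw [hfull]
      exact mul_le_mul_of_nonneg_left hQ (by linarith)
    have h2 : (∏ k ∈ Finset.Icc 1 (N - 1), (ρ k)⁻¹) ≤
        ∑ j ∈ Finset.Icc 1 (N - 1), ∏ k ∈ Finset.Icc 1 j, (ρ k)⁻¹ :=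
      Finset.single_le_sum hterm_nonneg (Finset.mem_Icc.2 ⟨hN1, le_rfl⟩)
    linarith
  have hnum0 : (0:ℝ) ≤ 1 + ∑ j ∈ Finset.Icc 1 (i - 1), ∏ k ∈ Finset.Icc 1 j, (ρ k)⁻¹ := by
    have : 0 ≤ ∑ j ∈ Finset.Icc 1 (i - 1), ∏ k ∈ Finset.Icc 1 j, (ρ k)⁻¹ :=
      Finset.sum_nonneg fun j hj => hterm_nonneg j (hsubP hj)
    linarith
  have hden0 : (0:ℝ) < 1 + ∑ j ∈ Finset.Icc 1 (N - 1), ∏ k ∈ Finset.Icc 1 j, (ρ k)⁻¹ := by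
    have : 0 ≤ ∑ j ∈ Finset.Icc 1 (N - 1), ∏ k ∈ Finset.Icc 1 j, (ρ k)⁻¹ :=
      Finset.sum_nonneg hterm_nonneg
    linarith
  refine ⟨div_nonneg hnum0 hden0.le, ?_⟩
  rw [div_le_iff₀ hden0]
  have hpow_ne : (1 - δ) ^ (N - i) ≠ 0 := by positivity
  have hkey : (i : ℝ) * (1 - δ) ^ (N - i) * (P * ((1 - δ)⁻¹) ^ (N - i)) = (i : ℝ) * P := by
    rw [inv_pow]
    field_simp
  calc (1 + ∑ j ∈ Finset.Icc 1 (i - 1), ∏ k ∈ Finset.Icc 1 j, (ρ k)⁻¹) ≤ (i : ℝ) * P := hnum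
    _ = (i : ℝ) * (1 - δ) ^ (N - i) * (P * ((1 - δ)⁻¹) ^ (N - i)) := hkey.symm
    _ ≤ (i : ℝ) * (1 - δ) ^ (N - i) *
        (1 + ∑ j ∈ Finset.Icc 1 (N - 1), ∏ k ∈ Finset.Icc 1 j, (ρ k)⁻¹) := by
        refine mul_le_mul_of_nonneg_left hden_ge (by positivity)

set_option maxHeartbeats 1600000 in
/-- along N = m·N₀ with N₀·x integer, x ∈ (0,1):
if R(0) > 1 and R(1) > 1 then π_{Nx}^{(N)} → 1, and if R(0) < 1 and R(1) < 1
then π_{Nx}^{(N)} → 0. -/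
theorem moran_large_N_dominance
    (a b c d w : ℝ)
    (ha : 0 < a) (hb : 0 < b) (hc : 0 < c) (hd : 0 < d)
    (hw0 : 0 ≤ w) (hw1 : w ≤ 1)
    (r : ℕ → ℕ → ℝ)
    (hr : ∀ N i, 3 ≤ N → 1 ≤ i →
      r N i = (1 - w + w * (a * ((i : ℝ) - 1) / ((N : ℝ) - 1) +
                b * ((N : ℝ) - (i : ℝ)) / ((N : ℝ) - 1))) /
              (1 - w + w * (c * (i : ℝ) / ((N : ℝ) - 1) +
                d * ((N : ℝ) - (i : ℝ) - 1) / ((N : ℝ) - 1))))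
    (R : ℝ → ℝ)
    (hR : ∀ y, R y = (1 - w + w * (a * y + b * (1 - y))) /
                     (1 - w + w * (c * y + d * (1 - y))))
    (π : ℕ → ℕ → ℝ)
    (hπ0 : ∀ N, π N 0 = 0) (hπN : ∀ N, π N N = 1)
    (hπ : ∀ N i, 3 ≤ N → 1 ≤ i → i ≤ N - 1 →
      π N i = (1 + ∑ j ∈ Finset.Icc 1 (i - 1), ∏ k ∈ Finset.Icc 1 j, (r N k)⁻¹) /
              (1 + ∑ j ∈ Finset.Icc 1 (N - 1), ∏ k ∈ Finset.Icc 1 j, (r N k)⁻¹))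
    (N₀ : ℕ) (hN₀ : 0 < N₀) (x : ℝ) (hx0 : 0 < x) (hx1 : x < 1)
    (k : ℕ) (hk : (k : ℝ) = (N₀ : ℝ) * x) :
    (1 < R 0 → 1 < R 1 →
      Filter.Tendsto (fun m : ℕ => π (m * N₀) (m * k)) Filter.atTop (nhds 1)) ∧
    (R 0 < 1 → R 1 < 1 →
      Filter.Tendsto (fun m : ℕ => π (m * N₀) (m * k)) Filter.atTop (nhds 0)) := by
  have hgd : (0:ℝ) < 1 - w + w * d := by have := convex_pos hw0 hw1 one_pos hd; linarith
  have hgc : (0:ℝ) < 1 - w + w * c := by have := convex_pos hw0 hw1 one_pos hc; linarith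
  have hN₀r : (0:ℝ) < (N₀:ℝ) := by exact_mod_cast hN₀
  have hk0 : 0 < k := by
    have : (0:ℝ) < (k:ℝ) := by rw [hk]; positivity
    exact_mod_cast this
  have hkN₀ : k + 1 ≤ N₀ := by
    have h1 : (k:ℝ) < (N₀:ℝ) := by rw [hk]; nlinarith
    have : k < N₀ := by exact_mod_cast h1
    omega
  have e0 : R 0 = (1 - w + w * b) / (1 - w + w * d) := by rw [hR]; norm_num
  have e1 : R 1 = (1 - w + w * a) / (1 - w + w * c) := by rw [hR]; norm_num
  constructor
  · -- dominance of A : fixation probability tends to 1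
    intro hR0 hR1
    rw [e0] at hR0
    rw [e1] at hR1
    have hwbd : w * d < w * b := by
      have := (one_lt_div hgd).1 hR0
      linarith
    have hwac : w * c < w * a := by
      have := (one_lt_div hgc).1 hR1
      linarith
    have hw : 0 < w := by
      rcases eq_or_lt_of_le hw0 with h | h
      · exfalso; rw [← h] at hwbd; simp at hwbd
      · exact h
    have hbd : d < b := lt_of_mul_lt_mul_left hwbd hw.le
    have hac : c < a := lt_of_mul_lt_mul_left hwac hw.le
    obtain ⟨δ, hδ, M, hrge⟩ := ratio_ge ha hb hc hd hw hw1 hac hbd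
    have hq0 : (0:ℝ) < (1 + δ)⁻¹ := by positivity
    have hq1 : (1 + δ)⁻¹ < 1 := by rw [inv_lt_one_iff₀]; right; linarith
    have hlim : Filter.Tendsto
        (fun m : ℕ => 1 - (N₀:ℝ) * ((m:ℝ) * ((1 + δ)⁻¹) ^ m)) Filter.atTop (nhds 1) := by
      have h0 : Filter.Tendsto (fun m : ℕ => (m:ℝ) * ((1 + δ)⁻¹) ^ m) Filter.atTop (nhds 0) := by
        have := tendsto_pow_const_mul_const_pow_of_lt_one 1 hq0.le hq1
        simpa using this
      have h1 := (h0.const_mul (N₀:ℝ)).const_sub 1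
      simpa using h1
    have hev : ∀ᶠ m : ℕ in Filter.atTop,
        1 - (N₀:ℝ) * ((m:ℝ) * ((1 + δ)⁻¹) ^ m) ≤ π (m * N₀) (m * k) ∧
        π (m * N₀) (m * k) ≤ 1 := by
      filter_upwards [Filter.eventually_ge_atTop (M + 3)] with m hm
      have hm1 : 1 ≤ m := by omega
      have hmN : m ≤ m * N₀ := by
        have h := Nat.mul_le_mul (le_refl m) hN₀
        rwa [Nat.mul_one] at h
      have hN3 : 3 ≤ m * N₀ := le_trans (by omega) hmN
      have hMN : M ≤ m * N₀ := le_trans (by omega) hmN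
      have hi1 : 1 ≤ m * k := Nat.mul_pos (by omega) hk0
      have hik : m * (k + 1) ≤ m * N₀ := Nat.mul_le_mul (le_refl m) hkN₀
      have hiN : m * k ≤ m * N₀ - 1 := by
        have h : m * k + m = m * (k + 1) := by ring
        omega
      rw [hπ (m * N₀) (m * k) hN3 hi1 hiN]
      have hρ : ∀ k' ∈ Finset.Icc 1 (m * N₀ - 1), 1 + δ ≤ r (m * N₀) k' := by
        intro k' hk'
        rw [Finset.mem_Icc] at hk'
        rw [hr (m * N₀) k' hN3 hk'.1]
        exact hrge (m * N₀) k' hMN hN3 hk'.1 hk'.2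
      have hres := pi_near_one (r (m * N₀)) (m * N₀) (m * k) δ hδ hρ hi1 hiN
      refine ⟨le_trans ?_ hres.1, hres.2⟩
      have hkm : m ≤ m * k := by
        have h := Nat.mul_le_mul (le_refl m) hk0
        rwa [Nat.mul_one] at h
      have h1 : ((m * N₀ : ℕ):ℝ) - ((m * k : ℕ):ℝ) ≤ (N₀:ℝ) * (m:ℝ) := by
        push_cast
        nlinarith [mul_nonneg (Nat.cast_nonneg (α := ℝ) m) (Nat.cast_nonneg (α := ℝ) k)]
      have h2 : ((1 + δ)⁻¹) ^ (m * k) ≤ ((1 + δ)⁻¹) ^ m :=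
        pow_le_pow_of_le_one hq0.le hq1.le hkm
      have h3 : ((m * N₀ : ℕ):ℝ) - ((m * k : ℕ):ℝ) ≥ 0 := by
        have : m * k ≤ m * N₀ := by omega
        have := (Nat.cast_le (α := ℝ)).2 this
        linarith
      have h4 : (((m * N₀ : ℕ):ℝ) - ((m * k : ℕ):ℝ)) * ((1 + δ)⁻¹) ^ (m * k) ≤
          ((N₀:ℝ) * (m:ℝ)) * ((1 + δ)⁻¹) ^ m :=
        mul_le_mul h1 h2 (by positivity) (by positivity)
      linarith [h4]
    exact tendsto_of_tendsto_of_tendsto_of_le_of_le' hlim tendsto_const_nhds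
      (hev.mono fun m h => h.1) (hev.mono fun m h => h.2)
  · -- dominance of B : fixation probability tends to 0
    intro hR0 hR1
    rw [e0] at hR0
    rw [e1] at hR1
    have hwbd : w * b < w * d := by
      have := (div_lt_one hgd).1 hR0
      linarith
    have hwac : w * a < w * c := by
      have := (div_lt_one hgc).1 hR1
      linarith
    have hw : 0 < w := by
      rcases eq_or_lt_of_le hw0 with h | h
      · exfalso; rw [← h] at hwbd; simp at hwbd
      · exact h
    have hbd : b < d := lt_of_mul_lt_mul_left hwbd hw.le
    have hac : a < c := lt_of_mul_lt_mul_left hwac hw.le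
    obtain ⟨δ, hδ0, hδ1, M, hrle⟩ := ratio_le ha hb hc hd hw hw1 hac hbd
    have hd0 : (0:ℝ) < 1 - δ := by linarith
    have hlim : Filter.Tendsto
        (fun m : ℕ => (N₀:ℝ) * ((m:ℝ) * (1 - δ) ^ m)) Filter.atTop (nhds 0) := by
      have h0 : Filter.Tendsto (fun m : ℕ => (m:ℝ) * (1 - δ) ^ m) Filter.atTop (nhds 0) := by
        have := tendsto_pow_const_mul_const_pow_of_lt_one 1 hd0.le (by linarith)
        simpa using this
      have h1 := h0.const_mul (N₀:ℝ)
      simpa using h1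
    have hev : ∀ᶠ m : ℕ in Filter.atTop,
        0 ≤ π (m * N₀) (m * k) ∧
        π (m * N₀) (m * k) ≤ (N₀:ℝ) * ((m:ℝ) * (1 - δ) ^ m) := by
      filter_upwards [Filter.eventually_ge_atTop (M + 3)] with m hm
      have hm1 : 1 ≤ m := by omega
      have hmN : m ≤ m * N₀ := by
        have h := Nat.mul_le_mul (le_refl m) hN₀
        rwa [Nat.mul_one] at h
      have hN3 : 3 ≤ m * N₀ := le_trans (by omega) hmN
      have hMN : M ≤ m * N₀ := le_trans (by omega) hmN
      have hi1 : 1 ≤ m * k := Nat.mul_pos (by omega) hk0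
      have hik : m * (k + 1) ≤ m * N₀ := Nat.mul_le_mul (le_refl m) hkN₀
      have hiN : m * k ≤ m * N₀ - 1 := by
        have h : m * k + m = m * (k + 1) := by ring
        omega
      rw [hπ (m * N₀) (m * k) hN3 hi1 hiN]
      have hρpos : ∀ k' ∈ Finset.Icc 1 (m * N₀ - 1), 0 < r (m * N₀) k' := by
        intro k' hk'
        rw [Finset.mem_Icc] at hk'
        rw [hr (m * N₀) k' hN3 hk'.1]
        exact div_pos (fexpr_pos ha hb hw0 hw1 hN3 hk'.1 hk'.2)
          (gexpr_pos hc hd hw0 hw1 hN3 hk'.1 hk'.2)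
      have hρ : ∀ k' ∈ Finset.Icc 1 (m * N₀ - 1), r (m * N₀) k' ≤ 1 - δ := by
        intro k' hk'
        rw [Finset.mem_Icc] at hk'
        rw [hr (m * N₀) k' hN3 hk'.1]
        exact hrle (m * N₀) k' hMN hN3 hk'.1 hk'.2
      have hres := pi_near_zero (r (m * N₀)) (m * N₀) (m * k) δ hδ0 hδ1 hρpos hρ hi1 hiN
      refine ⟨hres.1, le_trans hres.2 ?_⟩
      have hkR : (k:ℝ) ≤ (N₀:ℝ) := by exact_mod_cast (by omega : k ≤ N₀)
      have hA : ((m * k : ℕ):ℝ) ≤ (N₀:ℝ) * (m:ℝ) := by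
        push_cast
        nlinarith [Nat.cast_nonneg (α := ℝ) m]
      have hBexp : m ≤ m * N₀ - m * k := by
        have h : m * k + m = m * (k + 1) := by ring
        omega
      have hB : (1 - δ) ^ (m * N₀ - m * k) ≤ (1 - δ) ^ m :=
        pow_le_pow_of_le_one hd0.le (by linarith) hBexp
      have h4 : ((m * k : ℕ):ℝ) * (1 - δ) ^ (m * N₀ - m * k) ≤
          ((N₀:ℝ) * (m:ℝ)) * (1 - δ) ^ m :=
        mul_le_mul hA hB (by positivity) (by positivity)
      linarith [h4]
    exact tendsto_of_tendsto_of_tendsto_of_le_of_le' tendsto_const_nhds hlim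
      (hev.mono fun m h => h.1) (hev.mono fun m h => h.2)
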